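/- Let G be a finite group, A and B subgroups of G with A ≠ B, A ≅ B ≅ AGL₂(3), G = ⟨A, B⟩, and S a Sylow 3-subgroup of A ∩ B such that N_G(Z(S)) ≤ A. Then S is a Sylow 3-subgroup of A, of B, and of G. -/

import Mathlib

abbrev GL23 := Matrix.GeneralLinearGroup (Fin 2) (ZMod 3)
abbrev V23 := Multiplicative (Fin 2 → ZMod 3)

def glAddAut (g : GL23) : (Fin 2 → ZMod 3) ≃+ (Fin 2 → ZMod 3) where
  toFun v := (g : Matrix (Fin 2) (Fin 2) (ZMod 3)).mulVec v
  invFun v := ((g⁻¹ : GL23) : Matrix (Fin 2) (Fin 2) (ZMod 3)).mulVec v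
  left_inv v := by
    have hd : IsUnit ((g : Matrix (Fin 2) (Fin 2) (ZMod 3)).det) :=
      (Matrix.isUnit_iff_isUnit_det _).mp g.isUnit
    simp only [Matrix.mulVec_mulVec, Units.inv_mul, Matrix.one_mulVec]
  right_inv v := by
    have hd : IsUnit ((g : Matrix (Fin 2) (Fin 2) (ZMod 3)).det) :=
      (Matrix.isUnit_iff_isUnit_det _).mp g.isUnit
    simp only [Matrix.mulVec_mulVec, Units.mul_inv, Matrix.one_mulVec]
  map_add' x y := Matrix.mulVec_add _ x y

def aglPhi : GL23 →* MulAut V23 where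
  toFun g := AddEquiv.toMultiplicative (glAddAut g)
  map_one' := by
    ext v
    simp [glAddAut, AddEquiv.toMultiplicative]
  map_mul' g h := by
    ext v
    simp [glAddAut, AddEquiv.toMultiplicative, Matrix.mulVec_mulVec]
    rename_i i
    fin_cases i <;> simp [Matrix.mul_apply, Fin.sum_univ_two] <;> ring

/-- The affine group `AGL₂(3) = (F₃)² ⋊ GL₂(3)`. -/
def AGL23 := SemidirectProduct V23 GL23 aglPhi

instance : Group AGL23 := SemidirectProduct.instGroup


/-- `S` is a Sylow 3-subgroup of the subgroup `K`: `S` is a 3-subgroup of `K`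
maximal among 3-subgroups of `K`. -/
def IsSylow3In {G : Type*} [Group G] (S K : Subgroup G) : Prop :=
  S ≤ K ∧ IsPGroup 3 ↥S ∧
    ∀ T : Subgroup G, IsPGroup 3 ↥T → T ≤ K → S ≤ T → T = S

section AuxCard

/-- `AGL23` is, as a type, just a product. -/
def aglEquivProd : AGL23 ≃ V23 × GL23 :=
  show SemidirectProduct V23 GL23 aglPhi ≃ V23 × GL23 from
    { toFun := fun x => (x.left, x.right)
      invFun := fun p => ⟨p.1, p.2⟩
      left_inv := fun _ => rfl
      right_inv := fun _ => rfl }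

lemma card_GL23 : Nat.card GL23 = 48 := by
  rw [Matrix.card_GL_field]
  simp [Fin.prod_univ_two, ZMod.card]

lemma card_V23 : Nat.card V23 = 9 := by
  simp [V23, Nat.card_eq_fintype_card]

lemma card_AGL23 : Nat.card AGL23 = 432 := by
  rw [Nat.card_congr aglEquivProd, Nat.card_prod, card_V23, card_GL23]

lemma factorization432 : (432 : ℕ).factorization 3 = 3 := by
  have hp : Nat.Prime 3 := by norm_num
  have h1 : (3:ℕ)^3 ∣ 432 := by norm_num
  have hle : 3 ≤ (432 : ℕ).factorization 3 :=
    (Nat.Prime.pow_dvd_iff_le_factorization hp (by norm_num)).mp h1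
  have hge : (432 : ℕ).factorization 3 ≤ 3 := by
    by_contra h
    push_neg at h
    have := (Nat.Prime.pow_dvd_iff_le_factorization hp (n := 432) (by norm_num)).mpr h
    norm_num at this
  omega

end AuxCard

section AuxGroup
variable {G : Type*} [Group G]

lemma mem_mapCenter_iff (S : Subgroup G) (x : G) :
    x ∈ Subgroup.map S.subtype (Subgroup.center ↥S) ↔ x ∈ S ∧ ∀ s ∈ S, s * x = x * s := by
  constructor
  · rintro ⟨y, hyc, rfl⟩
    refine ⟨y.2, fun s hs => ?_⟩
    simpa using congrArg Subtype.val (Subgroup.mem_center_iff.mp hyc ⟨s, hs⟩)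
  · rintro ⟨hx, hc⟩
    exact ⟨⟨x, hx⟩, Subgroup.mem_center_iff.mpr fun g => Subtype.ext (hc g g.2), rfl⟩

lemma conj_mem_mapCenter {S : Subgroup G} {g x : G} (hg : g ∈ Subgroup.normalizer (S : Set G))
    (hx : x ∈ Subgroup.map S.subtype (Subgroup.center ↥S)) :
    g * x * g⁻¹ ∈ Subgroup.map S.subtype (Subgroup.center ↥S) := by
  rw [mem_mapCenter_iff] at hx ⊢
  obtain ⟨hxS, hxc⟩ := hx
  rw [Subgroup.mem_normalizer_iff] at hg
  refine ⟨(hg x).mp hxS, fun s hs => ?_⟩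
  have hs' : g⁻¹ * s * g ∈ S := (hg _).mpr (by simpa [mul_assoc] using hs)
  calc s * (g * x * g⁻¹) = g * ((g⁻¹ * s * g) * x) * g⁻¹ := by group
    _ = g * (x * (g⁻¹ * s * g)) * g⁻¹ := by rw [hxc _ hs']
    _ = (g * x * g⁻¹) * s := by group

lemma normalizer_le_mapCenter_normalizer (S : Subgroup G) :
    Subgroup.normalizer (S : Set G) ≤ Subgroup.normalizer (Subgroup.map S.subtype (Subgroup.center ↥S) : Set G) := by
  intro g hg
  rw [Subgroup.mem_normalizer_iff]
  intro x
  constructor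
  · exact fun hx => conj_mem_mapCenter hg hx
  · intro hx
    have := conj_mem_mapCenter (inv_mem hg) hx
    simpa [mul_assoc] using this

lemma lt_inf_normalizer [Finite G] {S T : Subgroup G}
    (hT : IsPGroup 3 ↥T) (hlt : S < T) : S < T ⊓ Subgroup.normalizer (S : Set G) := by
  haveI : Fact (Nat.Prime 3) := ⟨by norm_num⟩
  have hST : S ≤ T := hlt.le
  have hHtop : S.subgroupOf T < ⊤ := by
    rw [lt_top_iff_ne_top]
    intro h
    exact hlt.ne (le_antisymm hST (Subgroup.subgroupOf_eq_top.mp h))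
  haveI : Group.IsNilpotent ↥T := hT.isNilpotent
  have hlt' := normalizerCondition_of_isNilpotent (G := ↥T) _ hHtop
  obtain ⟨x, hxn, hxH⟩ := SetLike.exists_of_lt hlt'
  have hxnorm : (x : G) ∈ Subgroup.normalizer (S : Set G) := by
    rw [Subgroup.mem_normalizer_iff]
    intro g
    rw [Subgroup.mem_normalizer_iff] at hxn
    constructor
    · intro hgS
      have h1 : (⟨g, hST hgS⟩ : ↥T) ∈ S.subgroupOf T := hgS
      have := (hxn _).mp h1
      simpa [Subgroup.mem_subgroupOf] using this
    · intro hgS'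
      have hgT : g ∈ T := by
        have h := T.mul_mem (T.mul_mem (T.inv_mem x.2) (hST hgS')) x.2
        simpa [mul_assoc] using h
      have h1 : x * (⟨g, hgT⟩ : ↥T) * x⁻¹ ∈ S.subgroupOf T := by
        simpa [Subgroup.mem_subgroupOf] using hgS'
      exact (hxn _).mpr h1
  have hxS : (x : G) ∉ S := fun h => hxH h
  exact SetLike.lt_iff_le_and_exists.mpr
    ⟨le_inf hST Subgroup.le_normalizer, (x : G), (show (x : G) ∈ T ⊓ Subgroup.normalizer (S : Set G) from ⟨x.2, hxnorm⟩), hxS⟩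

end AuxGroup

/-- Theorem A setup: if `G = ⟨A,B⟩` is finite, `A ≠ B`, `A ≅ B ≅ AGL₂(3)`,
`S ∈ Syl₃(A ∩ B)` and `N_G(Z(S)) ≤ A`, then `S` is a Sylow 3-subgroup of `A`,
of `B`, and of `G`. -/
theorem stmt13 {G : Type*} [Group G] [Finite G] (A B S : Subgroup G)
    (hAB : A ≠ B)
    (hA : Nonempty (↥A ≃* AGL23)) (hB : Nonempty (↥B ≃* AGL23))
    (hgen : A ⊔ B = ⊤)
    (hS : IsSylow3In S (A ⊓ B))
    (hNZ : Subgroup.normalizer (Subgroup.map S.subtype (Subgroup.center ↥S) : Set G) ≤ A) :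
    IsSylow3In S A ∧ IsSylow3In S B ∧ IsSylow3In S ⊤ := by
  obtain ⟨hSle, hS3, hSmax⟩ := hS
  have hSA : S ≤ A := hSle.trans inf_le_left
  have hSB : S ≤ B := hSle.trans inf_le_right
  have cardA : Nat.card ↥A = 432 := (Nat.card_congr hA.some.toEquiv).trans card_AGL23
  have cardB : Nat.card ↥B = 432 := (Nat.card_congr hB.some.toEquiv).trans card_AGL23
  haveI : Fact (Nat.Prime 3) := ⟨by norm_num⟩
  -- Step 1: maximality in B
  have maxB : ∀ T : Subgroup G, IsPGroup 3 ↥T → T ≤ B → S ≤ T → T = S := by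
    intro T hT3 hTB hST
    by_contra hne
    have hgrow := lt_inf_normalizer hT3 (lt_of_le_of_ne hST (Ne.symm hne))
    have hNA : T ⊓ Subgroup.normalizer (S : Set G) ≤ A :=
      le_trans (inf_le_right.trans (normalizer_le_mapCenter_normalizer S)) hNZ
    have hNB : T ⊓ Subgroup.normalizer (S : Set G) ≤ B := inf_le_left.trans hTB
    have heq := hSmax (T ⊓ Subgroup.normalizer (S : Set G)) (hT3.to_le inf_le_left) (le_inf hNA hNB) hgrow.le
    exact (ne_of_lt hgrow) heq.symm
  -- Step 2: |S| = 27
  have cardS : Nat.card ↥S = 27 := by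
    obtain ⟨Q, hQ⟩ :=
      ((hS3.of_equiv (Subgroup.subgroupOfEquivOfLe hSB).symm)).exists_le_sylow
    have hmap : Subgroup.map B.subtype (Q : Subgroup ↥B) ≤ B := by
      rintro x ⟨y, -, rfl⟩; exact y.2
    have h3 : IsPGroup 3 ↥(Subgroup.map B.subtype (Q : Subgroup ↥B)) :=
      Q.isPGroup'.map _
    have hSQ : S ≤ Subgroup.map B.subtype (Q : Subgroup ↥B) := by
      have := Subgroup.map_mono (f := B.subtype) hQ
      rwa [Subgroup.subgroupOf_map_subtype, inf_eq_left.mpr hSB] at this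
    have heq := maxB _ h3 hmap hSQ
    have hiso : Nat.card ↥(Subgroup.map B.subtype (Q : Subgroup ↥B))
        = Nat.card ↥(Q : Subgroup ↥B) :=
      Nat.card_congr
        (Subgroup.equivMapOfInjective (Q : Subgroup ↥B) B.subtype B.subtype_injective).symm.toEquiv
    have hqcard := Q.card_eq_multiplicity
    rw [cardB, factorization432] at hqcard
    rw [← heq, hiso, hqcard]
    norm_num
  -- Step 3: maximality in A, by cardinality
  have maxA : ∀ T : Subgroup G, IsPGroup 3 ↥T → T ≤ A → S ≤ T → T = S := by
    intro T hT3 hTA hST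
    obtain ⟨k, hk⟩ := hT3.exists_card_eq
    have hdvd : Nat.card ↥T ∣ 432 := cardA ▸ Subgroup.card_dvd_of_le hTA
    have hle27 : Nat.card ↥T ≤ 27 := by
      rw [hk] at hdvd ⊢
      have hcop : Nat.Coprime (3 ^ k) 16 := Nat.Coprime.pow_left k (by norm_num)
      have h27 : (3:ℕ) ^ k ∣ 27 :=
        hcop.dvd_of_dvd_mul_right (by norm_num at hdvd ⊢; exact (by simpa using hdvd))
      exact Nat.le_of_dvd (by norm_num) h27
    exact (Subgroup.eq_of_le_of_card_ge hST (by omega)).symm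
  -- Step 4: maximality in G
  have maxTop : ∀ T : Subgroup G, IsPGroup 3 ↥T → T ≤ ⊤ → S ≤ T → T = S := by
    intro T hT3 _ hST
    by_contra hne
    have hgrow := lt_inf_normalizer hT3 (lt_of_le_of_ne hST (Ne.symm hne))
    have hNA : T ⊓ Subgroup.normalizer (S : Set G) ≤ A :=
      le_trans (inf_le_right.trans (normalizer_le_mapCenter_normalizer S)) hNZ
    have heq := maxA (T ⊓ Subgroup.normalizer (S : Set G)) (hT3.to_le inf_le_left) hNA hgrow.le
    exact (ne_of_lt hgrow) heq.symm
  exact ⟨⟨hSA, hS3, maxA⟩, ⟨hSB, hS3, maxB⟩, ⟨le_top, hS3, maxTop⟩⟩
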